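/- In the abstract tensor setting, suppose 1 ≤ m < n and there exist z_1, …, z_n ∈ T with m·z_j ≤ e ≤ z_1 + ⋯ + z_n (weak (m,n)-divisibility of e). If x, y_1, …, y_n ∈ S satisfy x ≤ m·y_j for all j, then x ⊗ e ≤ (y_1 + ⋯ + y_n) ⊗ e. -/

import Mathlib

private lemma tensor_sum_left {S T U : Type*}
    [AddCommMonoid S] [PartialOrder S] [IsOrderedAddMonoid S]
    [AddCommMonoid T] [PartialOrder T] [IsOrderedAddMonoid T]
    [AddCommMonoid U] [PartialOrder U] [IsOrderedAddMonoid U]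
    (tensor : S → T → U)
    (haddl : ∀ (x₁ x₂ : S) (y : T), tensor (x₁ + x₂) y = tensor x₁ y + tensor x₂ y)
    {ι : Type*} (s : Finset ι) (hs : s.Nonempty) (f : ι → S) (b : T) :
    tensor (∑ i ∈ s, f i) b = ∑ i ∈ s, tensor (f i) b := by
  induction hs using Finset.Nonempty.cons_induction with
  | singleton i => simp
  | cons i s hi hs ih =>
      rw [Finset.sum_cons, Finset.sum_cons, haddl, ih]

private lemma tensor_sum_right {S T U : Type*}
    [AddCommMonoid S] [PartialOrder S] [IsOrderedAddMonoid S]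
    [AddCommMonoid T] [PartialOrder T] [IsOrderedAddMonoid T]
    [AddCommMonoid U] [PartialOrder U] [IsOrderedAddMonoid U]
    (tensor : S → T → U)
    (haddr : ∀ (x : S) (y₁ y₂ : T), tensor x (y₁ + y₂) = tensor x y₁ + tensor x y₂)
    {ι : Type*} (s : Finset ι) (hs : s.Nonempty) (f : ι → T) (a : S) :
    tensor a (∑ i ∈ s, f i) = ∑ i ∈ s, tensor a (f i) := by
  induction hs using Finset.Nonempty.cons_induction with
  | singleton i => simp
  | cons i s hi hs ih =>
      rw [Finset.sum_cons, Finset.sum_cons, haddr, ih]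

private lemma tensor_smul_swap {S T U : Type*}
    [AddCommMonoid S] [PartialOrder S] [IsOrderedAddMonoid S]
    [AddCommMonoid T] [PartialOrder T] [IsOrderedAddMonoid T]
    [AddCommMonoid U] [PartialOrder U] [IsOrderedAddMonoid U]
    (tensor : S → T → U)
    (haddl : ∀ (x₁ x₂ : S) (y : T), tensor (x₁ + x₂) y = tensor x₁ y + tensor x₂ y)
    (haddr : ∀ (x : S) (y₁ y₂ : T), tensor x (y₁ + y₂) = tensor x y₁ + tensor x y₂)
    (k : ℕ) (a : S) (b : T) :
    tensor ((k + 1) • a) b = tensor a ((k + 1) • b) := by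
  induction k with
  | zero => simp
  | succ k ih =>
      rw [succ_nsmul a, succ_nsmul b, haddl, haddr, ih]

/-- Abstract tensor setting.  If `1 ≤ m < n` and there are
`z 1, …, z n ∈ T` with `m • z j ≤ e` for all `j` and `e ≤ z 1 + ⋯ + z n`
(weak `(m,n)`-divisibility of `e`), and `x, y 1, …, y n ∈ S` satisfy `x ≤ m • y j`
for all `j`, then `x ⊗ e ≤ (y 1 + ⋯ + y n) ⊗ e`. -/
theorem tensor_comparison_weakly_divisible {S T U : Type*}
    [AddCommMonoid S] [PartialOrder S] [IsOrderedAddMonoid S]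
    [AddCommMonoid T] [PartialOrder T] [IsOrderedAddMonoid T]
    [AddCommMonoid U] [PartialOrder U] [IsOrderedAddMonoid U]
    (tensor : S → T → U)
    (haddl : ∀ (x₁ x₂ : S) (y : T), tensor (x₁ + x₂) y = tensor x₁ y + tensor x₂ y)
    (haddr : ∀ (x : S) (y₁ y₂ : T), tensor x (y₁ + y₂) = tensor x y₁ + tensor x y₂)
    (hmono : ∀ (x₁ x₂ : S) (y₁ y₂ : T), x₁ ≤ x₂ → y₁ ≤ y₂ → tensor x₁ y₁ ≤ tensor x₂ y₂)
    (m n : ℕ) (hm : 1 ≤ m) (hmn : m < n)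
    (e : T) (z : Fin n → T) (hz₁ : ∀ j, m • z j ≤ e) (hz₂ : e ≤ ∑ j, z j)
    (x : S) (y : Fin n → S) (hxy : ∀ j, x ≤ m • y j) :
    tensor x e ≤ tensor (∑ j, y j) e := by
  have hn : (0 : ℕ) < n := lt_of_le_of_lt (Nat.zero_le m) hmn
  have hne : (Finset.univ : Finset (Fin n)).Nonempty := by
    simpa [Finset.univ_nonempty_iff] using Fin.pos_iff_nonempty.mp hn
  obtain ⟨k, rfl⟩ : ∃ k, m = k + 1 := ⟨m - 1, by omega⟩
  calc tensor x e ≤ tensor x (∑ j, z j) := hmono _ _ _ _ le_rfl hz₂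
    _ = ∑ j, tensor x (z j) := tensor_sum_right tensor haddr _ hne _ _
    _ ≤ ∑ j, tensor ((k + 1) • y j) (z j) :=
        Finset.sum_le_sum fun j _ => hmono _ _ _ _ (hxy j) le_rfl
    _ = ∑ j, tensor (y j) ((k + 1) • z j) := by
        refine Finset.sum_congr rfl fun j _ => ?_
        exact tensor_smul_swap tensor haddl haddr k (y j) (z j)
    _ ≤ ∑ j, tensor (y j) e :=
        Finset.sum_le_sum fun j _ => hmono _ _ _ _ le_rfl (hz₁ j)
    _ = tensor (∑ j, y j) e := (tensor_sum_left tensor haddl _ hne _ _).symm
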